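/- Let a ≤ b be integers, let p be a probability mass function on ℤ whose support is exactly the finite integer interval I = [a,b] ∩ ℤ, define ψ(k) = (p(k+1) − p(k))/p(k) for k ∈ I, and let c : [a−1,b] ∩ ℤ → ℝ \ {0} be any nowhere-zero function. Then a random variable X taking values in I has probability mass function p if and only if E[c(X−1)(f(X) − f(X−1)) + (c(X) ψ(X) + c(X) − c(X−1)) f(X)] = 0 for every function f : ℤ → ℝ with f(a−1) = 0. -/

import Mathlib

/-- Let `p` be a pmf on ℤ with support exactly `[a,b] ∩ ℤ`,
`ψ k = (p (k+1) - p k)/p k`, and let `c` be nowhere zero on `[a-1,b] ∩ ℤ`.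
Then a random variable `X` taking values in `[a,b] ∩ ℤ` (with law `q`) has
pmf `p` if and only if
`E[c(X-1)(f(X) - f(X-1)) + (c(X)ψ(X) + c(X) - c(X-1)) f(X)] = 0`
for every `f : ℤ → ℝ` with `f (a-1) = 0`. -/
theorem stmt_3 (a b : ℤ) (hab : a ≤ b) (p : ℤ → ℝ)
    (hpos : ∀ k ∈ Finset.Icc a b, 0 < p k)
    (hzero : ∀ k : ℤ, k ∉ Finset.Icc a b → p k = 0)
    (hsum : ∑ k ∈ Finset.Icc a b, p k = 1)
    (ψ : ℤ → ℝ) (hψ : ∀ k ∈ Finset.Icc a b, ψ k = (p (k + 1) - p k) / p k)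
    (c : ℤ → ℝ) (hc : ∀ k ∈ Finset.Icc (a - 1) b, c k ≠ 0)
    (q : ℤ → ℝ)
    (hqpos : ∀ k ∈ Finset.Icc a b, 0 ≤ q k)
    (hqzero : ∀ k : ℤ, k ∉ Finset.Icc a b → q k = 0)
    (hqsum : ∑ k ∈ Finset.Icc a b, q k = 1) :
    (∀ k ∈ Finset.Icc a b, q k = p k) ↔
      (∀ f : ℤ → ℝ, f (a - 1) = 0 →
        ∑ k ∈ Finset.Icc a b, q k *
          (c (k - 1) * (f k - f (k - 1))
            + (c k * ψ k + c k - c (k - 1)) * f k) = 0) := by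
  have hpb1 : p (b + 1) = 0 := hzero _ (by simp [Finset.mem_Icc])
  -- key rewriting of the sum
  have key : ∀ f : ℤ → ℝ, f (a - 1) = 0 →
      ∑ k ∈ Finset.Icc a b, q k *
          (c (k - 1) * (f k - f (k - 1))
            + (c k * ψ k + c k - c (k - 1)) * f k)
        = ∑ k ∈ Finset.Icc a (b - 1),
            f k * c k * (q k * p (k + 1) / p k - q (k + 1)) := by
    intro f hf
    have step1 : ∑ k ∈ Finset.Icc a b, q k *
          (c (k - 1) * (f k - f (k - 1))
            + (c k * ψ k + c k - c (k - 1)) * f k)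
        = (∑ k ∈ Finset.Icc a b, q k * c k * (p (k + 1) / p k) * f k)
          - ∑ k ∈ Finset.Icc a b, q k * c (k - 1) * f (k - 1) := by
      rw [← Finset.sum_sub_distrib]
      apply Finset.sum_congr rfl
      intro k hk
      have hp := (hpos k hk).ne'
      rw [hψ k hk]
      field_simp
      ring
    rw [step1]
    -- first sum: drop the top term (it is zero since p (b+1) = 0)
    have hins : Finset.Icc a b = insert b (Finset.Icc a (b - 1)) := by
      ext x; simp only [Finset.mem_Icc, Finset.mem_insert]; omega
    have hnot : b ∉ Finset.Icc a (b - 1) := by simp [Finset.mem_Icc]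
    have hS1 : ∑ k ∈ Finset.Icc a b, q k * c k * (p (k + 1) / p k) * f k
        = ∑ k ∈ Finset.Icc a (b - 1), q k * c k * (p (k + 1) / p k) * f k := by
      rw [hins, Finset.sum_insert hnot, hpb1]
      simp
    -- second sum: reindex k ↦ k - 1
    have hS2 : ∑ k ∈ Finset.Icc a b, q k * c (k - 1) * f (k - 1)
        = ∑ k ∈ Finset.Icc (a - 1) (b - 1), q (k + 1) * c k * f k := by
      have hmap : Finset.Icc (a - 1) (b - 1)
          = (Finset.Icc a b).map ⟨fun k => k - 1, fun x y h => by dsimp at h; omega⟩ := by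
        ext x
        simp only [Finset.mem_map, Finset.mem_Icc, Function.Embedding.coeFn_mk]
        constructor
        · intro hx; exact ⟨x + 1, by omega, by show x + 1 - 1 = x; ring⟩
        · rintro ⟨y, hy, rfl⟩; show a - 1 ≤ y - 1 ∧ y - 1 ≤ b - 1; omega
      rw [hmap, Finset.sum_map]
      apply Finset.sum_congr rfl
      intro k hk
      show q k * c (k - 1) * f (k - 1) = q (k - 1 + 1) * c (k - 1) * f (k - 1)
      have h1 : k - 1 + 1 = k := by ring
      rw [h1]
    have hins2 : Finset.Icc (a - 1) (b - 1) = insert (a - 1) (Finset.Icc a (b - 1)) := by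
      ext x; simp only [Finset.mem_Icc, Finset.mem_insert]; omega
    have hnot2 : (a - 1) ∉ Finset.Icc a (b - 1) := by simp [Finset.mem_Icc]
    rw [hS1, hS2, hins2, Finset.sum_insert hnot2, hf, mul_zero, zero_add,
      ← Finset.sum_sub_distrib]
    apply Finset.sum_congr rfl
    intro k hk
    ring
  constructor
  · intro hq f hf
    rw [key f hf]
    apply Finset.sum_eq_zero
    intro k hk
    simp only [Finset.mem_Icc] at hk
    have hk1 : k ∈ Finset.Icc a b := by simp only [Finset.mem_Icc]; omega
    have hk2 : k + 1 ∈ Finset.Icc a b := by simp only [Finset.mem_Icc]; omega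
    rw [hq k hk1, hq (k + 1) hk2]
    have hp := (hpos k hk1).ne'
    field_simp
    ring
  · intro h
    -- extract pointwise recurrence
    have hrec : ∀ j ∈ Finset.Icc a (b - 1), q (j + 1) * p j = q j * p (j + 1) := by
      intro j hj
      have hj' : a ≤ j ∧ j ≤ b - 1 := Finset.mem_Icc.mp hj
      have hfj : (if (a - 1 : ℤ) = j then (1 : ℝ) else 0) = 0 := by
        rw [if_neg (by omega)]
      have hthis := h (fun k => if k = j then (1 : ℝ) else 0) hfj
      rw [key _ hfj] at hthis
      rw [Finset.sum_eq_single j] at hthis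
      · norm_num at hthis
        have hcj : c j ≠ 0 := hc j (by simp only [Finset.mem_Icc]; omega)
        have hpj : p j ≠ 0 := (hpos j (by simp only [Finset.mem_Icc]; omega)).ne'
        have h2 : q j * p (j + 1) / p j - q (j + 1) = 0 := by
          rcases hthis with h' | h'
          · exact absurd h' hcj
          · exact h'
        have h3 := sub_eq_zero.mp h2
        field_simp at h3
        linarith [h3]
      · intro k hk hkj; rw [if_neg hkj]; ring
      · intro hj2; exact absurd hj hj2
    -- induction: q k * p a = q a * p k on [a, b]
    have hqa : ∀ k, a ≤ k → k ≤ b → q k * p a = q a * p k := by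
      intro k hk hkb
      refine Int.le_induction (motive := fun k _ => k ≤ b → q k * p a = q a * p k) ?_ ?_ k hk hkb
      · intro _; ring
      · intro n hn ih hnb
        have hrec' := hrec n (by simp only [Finset.mem_Icc]; omega)
        have hpn : p n ≠ 0 := (hpos n (by simp only [Finset.mem_Icc]; omega)).ne'
        have ihn := ih (by omega)
        have hcalc : q (n + 1) * p a * p n = q a * p (n + 1) * p n := by
          calc q (n + 1) * p a * p n = (q (n + 1) * p n) * p a := by ring
          _ = (q n * p (n + 1)) * p a := by rw [hrec']
          _ = (q n * p a) * p (n + 1) := by ring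
          _ = (q a * p n) * p (n + 1) := by rw [ihn]
          _ = q a * p (n + 1) * p n := by ring
        exact mul_right_cancel₀ hpn hcalc
    have hsum2 : ∑ k ∈ Finset.Icc a b, q k * p a = ∑ k ∈ Finset.Icc a b, q a * p k := by
      apply Finset.sum_congr rfl
      intro k hk
      have hk' := Finset.mem_Icc.mp hk
      exact hqa k hk'.1 hk'.2
    rw [← Finset.sum_mul, hqsum, ← Finset.mul_sum, hsum, one_mul, mul_one] at hsum2
    intro k hk
    have hk' := Finset.mem_Icc.mp hk
    have h1 := hqa k hk'.1 hk'.2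
    have hpa : p a ≠ 0 := (hpos a (by simp only [Finset.mem_Icc]; omega)).ne'
    rw [← hsum2] at h1
    exact mul_right_cancel₀ hpa (by linarith [h1])
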